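/- The speculation transformation and the generalized left-corner transformation with the same parameters produce grammars whose full derivation sets are in a structure-preserving bijection: for any weighted CFG G, rule subset P, and symbol subset C, there is a bijection between derivations of SPEC(G, P, C) and derivations of GLCT(G, P, C), over all symbols (original, frozen, and slashed), preserving root label, yield, and weight. -/

import Mathlib

/-- Symbols of a grammar: nonterminals `N` or terminals `T`. -/
abbrev GSym (N T : Type) := N ⊕ T

/-- A weighted production rule `X →w α`. -/
abbrev GRule (N T W : Type) := N × List (GSym N T) × W

/-- A weighted context-free grammar (rules form a bag/set of weighted rules). -/
structure WCFG (N T W : Type) where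
  start : N
  rules : Set (GRule N T W)

/-- Derivation trees (with a possible `gap` leaf, used to represent a removed
left corner; well-formed derivations contain no gaps). -/
inductive DTree (N T W : Type) where
  | leaf : T → DTree N T W
  | gap  : DTree N T W
  | node : N → W → List (DTree N T W) → DTree N T W

namespace DTree

variable {N T W : Type}

def label : DTree N T W → Option (GSym N T)
  | leaf a => some (Sum.inr a)
  | gap => none
  | node X _ _ => some (Sum.inl X)

def yield : DTree N T W → List T
  | leaf a => [a]
  | gap => []
  | node _ _ ts => (ts.attach.map fun t => t.1.yield).flatten
decreasing_by simp only [DTree.node.sizeOf_spec]; have := List.sizeOf_lt_of_mem t.2; omega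

def weight [Semiring W] : DTree N T W → W
  | leaf _ => 1
  | gap => 1
  | node _ w ts => w * (ts.attach.map fun t => t.1.weight).prod
decreasing_by simp only [DTree.node.sizeOf_spec]; have := List.sizeOf_lt_of_mem t.2; omega

/-- The list of weights of the rules applied at internal nodes. -/
def ruleWeights : DTree N T W → List W
  | leaf _ => []
  | gap => []
  | node _ w ts => w :: (ts.attach.map fun t => t.1.ruleWeights).flatten
decreasing_by simp only [DTree.node.sizeOf_spec]; have := List.sizeOf_lt_of_mem t.2; omega

/-- Left-recursion depth: length of the path from the root to the leftmost leaf. -/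
def lrDepth : DTree N T W → ℕ
  | leaf _ => 0
  | gap => 0
  | node _ _ [] => 0
  | node _ _ (t1 :: _) => t1.lrDepth + 1

/-- `Sub s t` : `s` is a subtree of `t`. -/
inductive Sub : DTree N T W → DTree N T W → Prop
  | refl (t : DTree N T W) : Sub t t
  | child {s t : DTree N T W} {X w ts} : t ∈ ts → Sub s t → Sub s (node X w ts)

end DTree

variable {N T W : Type}

/-- The children list `ts` together with head `X` and weight `w` matches a rule in `R`. -/
def RuleApp (R : Set (GRule N T W)) (X : N) (ts : List (DTree N T W)) (w : W) : Prop :=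
  ∃ rhs, (X, rhs, w) ∈ R ∧ ts.map DTree.label = rhs.map some

/-- Well-formed derivations of a grammar. -/
inductive DTree.WF (G : WCFG N T W) : DTree N T W → Prop
  | leaf (a : T) : DTree.WF G (DTree.leaf a)
  | node {X : N} {w : W} {ts : List (DTree N T W)} :
      RuleApp G.rules X ts w → (∀ t ∈ ts, DTree.WF G t) →
      DTree.WF G (DTree.node X w ts)

/-- The weighted language of a symbol `α`: the sum of the weights of all
well-formed derivations rooted at `α` whose yield is `x`. -/
noncomputable def WCFG.lang [Semiring W] (G : WCFG N T W) (α : GSym N T) (x : List T) : W :=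
  ∑ᶠ t : {t : DTree N T W // t.WF G ∧ t.label = some α ∧ t.yield = x}, (t : DTree N T W).weight

/-- `α` occurs as the label of some subderivation of some derivation rooted at the start symbol. -/
def WCFG.Useful (G : WCFG N T W) (α : GSym N T) : Prop :=
  ∃ t s : DTree N T W, t.WF G ∧ t.label = some (Sum.inl G.start) ∧ s.Sub t ∧ s.label = some α

/-- Trimming: keep only the rules all of whose symbols are useful. -/
def WCFG.trim (G : WCFG N T W) : WCFG N T W where
  start := G.start
  rules := {r | r ∈ G.rules ∧ ∀ s ∈ (Sum.inl r.1 :: r.2.1), G.Useful s}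

/-- A rule participates in some derivation rooted at the start symbol. -/
def WCFG.RuleUseful (G : WCFG N T W) (r : GRule N T W) : Prop :=
  ∃ t s : DTree N T W, t.WF G ∧ t.label = some (Sum.inl G.start) ∧ s.Sub t ∧
    ∃ ts, s = DTree.node r.1 r.2.2 ts ∧ ts.map DTree.label = r.2.1.map some

/-- Union of weighted languages. -/
def wunion [Semiring W] (L L' : List T → W) : List T → W := fun x => L x + L' x

/-- Concatenation of weighted languages: sum over the two-part factorizations. -/
def wconc [Semiring W] (L L' : List T → W) : List T → W := fun x =>
  ((List.range (x.length + 1)).map (fun i => L (x.take i) * L' (x.drop i))).sum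

/-- The zero weighted language. -/
def wzero [Semiring W] : List T → W := fun _ => 0

open Classical in
/-- The unit weighted language: `1` on the empty string, `0` elsewhere. -/
noncomputable def wone [Semiring W] : List T → W := fun x => if x = [] then 1 else 0

/-- Nonterminals of the output of the (generalized) left-corner / speculation
transformations: originals `X`, frozen `X̃`, and slashed `α/β`. -/
inductive LCNT (N T : Type) where
  | orig : N → LCNT N T
  | frozen : N → LCNT N T
  | slash : GSym N T → GSym N T → LCNT N T

/-- Embedding of original symbols into the transformed grammar's symbols. -/
def emb : GSym N T → GSym (LCNT N T) T := Sum.map LCNT.orig id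

/-- The frozen version `α̃` of a symbol (terminals are left unchanged). -/
def frz : GSym N T → GSym (LCNT N T) T
  | Sum.inl X => Sum.inl (LCNT.frozen X)
  | Sum.inr a => Sum.inr a

/-- The generalized left-corner transformation GLCT(G, P, C). -/
def GLCT (G : WCFG N T W) [One W] (P : Set (GRule N T W)) (C : Set (GSym N T)) :
    WCFG (LCNT N T) T W where
  start := LCNT.orig G.start
  rules :=
    {r | ∃ X : N, (Sum.inl X : GSym N T) ∉ C ∧
          r = (LCNT.orig X, [Sum.inl (LCNT.frozen X)], (1 : W))} ∪
    {r | ∃ (X : N) (α : GSym N T), α ∈ C ∧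
          r = (LCNT.orig X, [frz α, Sum.inl (LCNT.slash (Sum.inl X) α)], (1 : W))} ∪
    {r | ∃ α : GSym N T, r = (LCNT.slash α α, [], (1 : W))} ∪
    {r | ∃ (X : N) (α : GSym N T) (β : List (GSym N T)) (w : W) (Y : N),
          (X, α :: β, w) ∈ P ∧
          r = (LCNT.slash (Sum.inl Y) α,
               β.map emb ++ [Sum.inl (LCNT.slash (Sum.inl Y) (Sum.inl X))], w)} ∪
    {r | ∃ (X : N) (rhs : List (GSym N T)) (w : W),
          (X, rhs, w) ∈ G.rules ∧ (X, rhs, w) ∉ P ∧ r = (LCNT.frozen X, rhs.map emb, w)} ∪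
    {r | ∃ (X : N) (α : GSym N T) (β : List (GSym N T)) (w : W),
          (X, α :: β, w) ∈ P ∧ α ∉ C ∧ r = (LCNT.frozen X, frz α :: β.map emb, w)}

/-- The speculation transformation SPEC(G, P, C). -/
def SPEC (G : WCFG N T W) [One W] (P : Set (GRule N T W)) (C : Set (GSym N T)) :
    WCFG (LCNT N T) T W where
  start := LCNT.orig G.start
  rules :=
    {r | ∃ X : N, (Sum.inl X : GSym N T) ∉ C ∧
          r = (LCNT.orig X, [Sum.inl (LCNT.frozen X)], (1 : W))} ∪
    {r | ∃ (X : N) (α : GSym N T), α ∈ C ∧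
          r = (LCNT.orig X, [frz α, Sum.inl (LCNT.slash (Sum.inl X) α)], (1 : W))} ∪
    {r | ∃ α : GSym N T, r = (LCNT.slash α α, [], (1 : W))} ∪
    {r | ∃ (X : N) (α : GSym N T) (β : List (GSym N T)) (w : W) (Y : GSym N T),
          (X, α :: β, w) ∈ P ∧
          r = (LCNT.slash (Sum.inl X) Y,
               Sum.inl (LCNT.slash α Y) :: β.map emb, w)} ∪
    {r | ∃ (X : N) (rhs : List (GSym N T)) (w : W),
          (X, rhs, w) ∈ G.rules ∧ (X, rhs, w) ∉ P ∧ r = (LCNT.frozen X, rhs.map emb, w)} ∪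
    {r | ∃ (X : N) (α : GSym N T) (β : List (GSym N T)) (w : W),
          (X, α :: β, w) ∈ P ∧ α ∉ C ∧ r = (LCNT.frozen X, frz α :: β.map emb, w)}

/-- Edge relation of the left-recursion graph restricted to a rule set `R`:
an edge from `X` to the leftmost right-hand-side symbol of a rule in `R`. -/
def EdgeRel (R : Set (GRule N T W)) (a b : GSym N T) : Prop :=
  ∃ (X : N) (rhs : List (GSym N T)) (w : W),
    a = Sum.inl X ∧ (X, rhs, w) ∈ R ∧ rhs.head? = some b

/-- A rule is left-recursive if its edge lies on a cycle of the left-recursion graph. -/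
def LeftRecRule (G : WCFG N T W) (r : GRule N T W) : Prop :=
  ∃ b, r.2.1.head? = some b ∧ Relation.ReflTransGen (EdgeRel G.rules) b (Sum.inl r.1)

/-- `bottoms(P)`: the symbols that may appear at the bottom of a spine. -/
def bottoms (G : WCFG N T W) (P : Set (GRule N T W)) : Set (GSym N T) :=
  {α | ((∃ a : T, α = Sum.inr a) ∨
        ∃ (X : N) (rhs : List (GSym N T)) (w : W),
          α = Sum.inl X ∧ (X, rhs, w) ∈ G.rules ∧ (X, rhs, w) ∉ P ∧ rhs ≠ []) ∧
       (∃ (X : N) (rhs : List (GSym N T)) (w : W), (X, rhs, w) ∈ P ∧ rhs.head? = some α)}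


namespace SpecGlct

variable {N T W : Type}

/-- Numerator of the slash label at the root, with fallback. -/
def numOf (fb : GSym N T) : DTree (LCNT N T) T W → GSym N T
  | .node (.slash a _) _ _ => a
  | _ => fb

/-- Denominator of the slash label at the root, with fallback. -/
def denOf (fb : GSym N T) : DTree (LCNT N T) T W → GSym N T
  | .node (.slash _ b) _ _ => b
  | _ => fb

mutual
/-- SPEC-to-GLCT tree map. -/
def fS [One W] : DTree (LCNT N T) T W → DTree (LCNT N T) T W
  | .leaf a => .leaf a
  | .gap => .gap
  | .node (.orig X) w ts => .node (.orig X) w (ts.attach.map fun r => fS r.1)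
  | .node (.frozen X) w ts => .node (.frozen X) w (ts.attach.map fun r => fS r.1)
  | .node (.slash n _) _ [] => .node (.slash n n) 1 []
  | .node (.slash n _) w (t1 :: rest) =>
      auxS n t1 (.node (.slash n (numOf n t1)) w
        ((rest.attach.map fun r => fS r.1) ++ [.node (.slash n n) 1 []]))
termination_by t => sizeOf t
decreasing_by
  all_goals first
    | (have := List.sizeOf_lt_of_mem r.2
       simp only [DTree.node.sizeOf_spec, List.cons.sizeOf_spec]; omega)
    | (simp only [DTree.node.sizeOf_spec, List.cons.sizeOf_spec]; omega)

/-- Spine rotation, SPEC to GLCT. -/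
def auxS [One W] (n₀ : GSym N T) : DTree (LCNT N T) T W → DTree (LCNT N T) T W → DTree (LCNT N T) T W
  | .node (.slash n _) w (t1 :: rest), acc =>
      auxS n₀ t1 (.node (.slash n₀ (numOf n t1)) w
        ((rest.attach.map fun r => fS r.1) ++ [acc]))
  | _, acc => acc
termination_by t _ => sizeOf t
decreasing_by
  all_goals first
    | (have := List.sizeOf_lt_of_mem r.2
       simp only [DTree.node.sizeOf_spec, List.cons.sizeOf_spec]; omega)
    | (simp only [DTree.node.sizeOf_spec, List.cons.sizeOf_spec]; omega)
end

mutual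
/-- GLCT-to-SPEC tree map. -/
def hS [One W] : DTree (LCNT N T) T W → DTree (LCNT N T) T W
  | .leaf a => .leaf a
  | .gap => .gap
  | .node (.orig X) w ts => .node (.orig X) w (ts.attach.map fun r => hS r.1)
  | .node (.frozen X) w ts => .node (.frozen X) w (ts.attach.map fun r => hS r.1)
  | .node (.slash _ d) w cs =>
      match hl : cs.getLast? with
      | some l => auxI d l (.node (.slash (denOf d l) d) w
          ((.node (.slash d d) 1 []) :: (cs.dropLast.attach.map fun r => hS r.1)))
      | none => .node (.slash d d) 1 []
termination_by t => sizeOf t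
decreasing_by
  all_goals first
    | (have := List.sizeOf_lt_of_mem r.2
       simp only [DTree.node.sizeOf_spec, List.cons.sizeOf_spec]; omega)
    | (have h1 : l ∈ cs := List.mem_of_mem_getLast? hl
       have := List.sizeOf_lt_of_mem h1
       simp only [DTree.node.sizeOf_spec]; omega)
    | (have h1 : r.1 ∈ cs := List.dropLast_subset _ r.2
       have := List.sizeOf_lt_of_mem h1
       simp only [DTree.node.sizeOf_spec]; omega)

/-- Spine rotation, GLCT to SPEC. -/
def auxI [One W] (y₀ : GSym N T) : DTree (LCNT N T) T W → DTree (LCNT N T) T W → DTree (LCNT N T) T W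
  | .node (.slash _ _) w cs, acc =>
      (match hl : cs.getLast? with
      | some l => auxI y₀ l (.node (.slash (denOf y₀ l) y₀) w
          (acc :: (cs.dropLast.attach.map fun r => hS r.1)))
      | none => acc)
  | _, acc => acc
termination_by t _ => sizeOf t
decreasing_by
  all_goals first
    | (have h1 : l ∈ cs := List.mem_of_mem_getLast? hl
       have := List.sizeOf_lt_of_mem h1
       simp only [DTree.node.sizeOf_spec]; omega)
    | (have h1 : r.1 ∈ cs := List.dropLast_subset _ r.2
       have := List.sizeOf_lt_of_mem h1
       simp only [DTree.node.sizeOf_spec]; omega)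
end

/-- Replace the base node at the bottom of a SPEC-style (left) slash spine. -/
def substBase : DTree (LCNT N T) T W → DTree (LCNT N T) T W → DTree (LCNT N T) T W
  | .node (.slash n d) w (t1 :: rest), s => .node (.slash n d) w (substBase t1 s :: rest)
  | _, s => s

/-- Replace the base node at the bottom of a GLCT-style (right) slash spine. -/
def substLast : DTree (LCNT N T) T W → DTree (LCNT N T) T W → DTree (LCNT N T) T W
  | .node (.slash n d) w cs, s =>
      (match hl : cs.getLast? with
      | some l => .node (.slash n d) w (cs.dropLast ++ [substLast l s])
      | none => s)
  | _, s => s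
termination_by t _ => sizeOf t
decreasing_by
  have h1 : l ∈ cs := List.mem_of_mem_getLast? hl
  have := List.sizeOf_lt_of_mem h1
  simp only [DTree.node.sizeOf_spec]; omega

end SpecGlct
namespace SpecGlct

open DTree

@[simp] lemma yield_leaf (a : T) : (DTree.leaf a : DTree N T W).yield = [a] := by rw [DTree.yield]
@[simp] lemma yield_node (X : N) (w : W) (ts : List (DTree N T W)) :
    (DTree.node X w ts).yield = (ts.map DTree.yield).flatten := by
  rw [DTree.yield, List.attach_map_val]

@[simp] lemma weight_leaf [Semiring W] (a : T) : (DTree.leaf a : DTree N T W).weight = 1 := by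
  rw [DTree.weight]
@[simp] lemma weight_node [Semiring W] (X : N) (w : W) (ts : List (DTree N T W)) :
    (DTree.node X w ts).weight = w * (ts.map DTree.weight).prod := by
  rw [DTree.weight, List.attach_map_val]

@[simp] lemma label_node (X : N) (w : W) (ts : List (DTree N T W)) :
    (DTree.node X w ts).label = some (Sum.inl X) := rfl
@[simp] lemma label_leaf (a : T) : (DTree.leaf a : DTree N T W).label = some (Sum.inr a) := rfl
@[simp] lemma label_gap : (DTree.gap : DTree N T W).label = none := rfl

lemma node_of_label {t : DTree N T W} {X : N} (h : t.label = some (Sum.inl X)) :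
    ∃ w ts, t = DTree.node X w ts := by
  cases t with
  | leaf a => simp [DTree.label] at h
  | gap => simp [DTree.label] at h
  | node Y w ts =>
    simp only [label_node, Option.some.injEq, Sum.inl.injEq] at h
    exact ⟨w, ts, by rw [h]⟩

lemma wf_node_inv {G : WCFG N T W} {X w ts} (h : (DTree.node X w ts).WF G) :
    RuleApp G.rules X ts w ∧ ∀ t ∈ ts, t.WF G := by
  cases h with | node hr hts => exact ⟨hr, hts⟩

lemma map_label_cons {N' : Type} {ts : List (DTree N' T W)} {x : GSym N' T} {xs : List (GSym N' T)}
    (h : ts.map DTree.label = (x :: xs).map some) :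
    ∃ t rest, ts = t :: rest ∧ t.label = some x ∧ rest.map DTree.label = xs.map some := by
  cases ts with
  | nil => simp at h
  | cons t rest =>
    simp only [List.map_cons, List.cons.injEq] at h
    exact ⟨t, rest, rfl, h.1, h.2⟩

lemma map_label_concat {N' : Type} {ts : List (DTree N' T W)} {x : GSym N' T} {xs : List (GSym N' T)}
    (h : ts.map DTree.label = (xs ++ [x]).map some) :
    ∃ init l, ts = init ++ [l] ∧ init.map DTree.label = xs.map some ∧ l.label = some x := by
  rw [List.map_append] at h
  rcases List.map_eq_append_iff.mp h with ⟨init, l2, rfl, h1, h2⟩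
  cases l2 with
  | nil => simp at h2
  | cons l l2' =>
    simp only [List.map_cons, List.map_nil, List.cons.injEq] at h2
    have : l2' = [] := List.map_eq_nil_iff.mp h2.2
    subst this
    exact ⟨init, l, rfl, h1, h2.1⟩

end SpecGlct
namespace SpecGlct

section RuleLemmas

variable {W : Type} [One W] {G : WCFG N T W} {P : Set (GRule N T W)} {C : Set (GSym N T)}

lemma spec_base_mem (a : GSym N T) :
    ((LCNT.slash a a, [], 1) : GRule (LCNT N T) T W) ∈ (SPEC G P C).rules := by
  simp only [SPEC, Set.mem_union, Set.mem_setOf_eq]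
  exact Or.inl (Or.inl (Or.inl (Or.inr ⟨a, rfl⟩)))

lemma glct_base_mem (a : GSym N T) :
    ((LCNT.slash a a, [], 1) : GRule (LCNT N T) T W) ∈ (GLCT G P C).rules := by
  simp only [GLCT, Set.mem_union, Set.mem_setOf_eq]
  exact Or.inl (Or.inl (Or.inl (Or.inr ⟨a, rfl⟩)))

lemma spec_rec_mem {X : N} {α : GSym N T} {β : List (GSym N T)} {w : W} (Y : GSym N T)
    (h : (X, α :: β, w) ∈ P) :
    ((LCNT.slash (Sum.inl X) Y, Sum.inl (LCNT.slash α Y) :: β.map emb, w) : GRule (LCNT N T) T W)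
      ∈ (SPEC G P C).rules := by
  simp only [SPEC, Set.mem_union, Set.mem_setOf_eq]
  exact Or.inl (Or.inl (Or.inr ⟨X, α, β, w, Y, h, rfl⟩))

lemma glct_rec_mem {X : N} {α : GSym N T} {β : List (GSym N T)} {w : W} (Y : N)
    (h : (X, α :: β, w) ∈ P) :
    ((LCNT.slash (Sum.inl Y) α, β.map emb ++ [Sum.inl (LCNT.slash (Sum.inl Y) (Sum.inl X))], w)
      : GRule (LCNT N T) T W) ∈ (GLCT G P C).rules := by
  simp only [GLCT, Set.mem_union, Set.mem_setOf_eq]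
  exact Or.inl (Or.inl (Or.inr ⟨X, α, β, w, Y, h, rfl⟩))

lemma spec_slash_inv {a b : GSym N T} {rhs : List (GSym (LCNT N T) T)} {w : W}
    (hm : ((LCNT.slash a b, rhs, w) : GRule (LCNT N T) T W) ∈ (SPEC G P C).rules) :
    (a = b ∧ rhs = [] ∧ w = 1) ∨
    ∃ X α β, a = Sum.inl X ∧ (X, α :: β, w) ∈ P ∧
      rhs = Sum.inl (LCNT.slash α b) :: β.map emb := by
  simp only [SPEC, Set.mem_union, Set.mem_setOf_eq] at hm
  rcases hm with (((((⟨X, _, h⟩ | ⟨X, α, _, h⟩) | ⟨α, h⟩) | ⟨X, α, β, w', Y, hP, h⟩) |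
    ⟨X, rhs', w', _, _, h⟩) | ⟨X, α, β, w', _, _, h⟩) <;>
    simp only [Prod.mk.injEq] at h
  · exact absurd h.1 (by simp)
  · exact absurd h.1 (by simp)
  · obtain ⟨h1, h2, h3⟩ := h
    injection h1 with e1 e2
    exact Or.inl ⟨e1.trans e2.symm, h2, h3⟩
  · obtain ⟨h1, h2, h3⟩ := h
    injection h1 with e1 e2
    subst e2; subst h3
    exact Or.inr ⟨X, α, β, e1, hP, h2⟩
  · exact absurd h.1 (by simp)
  · exact absurd h.1 (by simp)

lemma glct_slash_inv {a b : GSym N T} {rhs : List (GSym (LCNT N T) T)} {w : W}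
    (hm : ((LCNT.slash a b, rhs, w) : GRule (LCNT N T) T W) ∈ (GLCT G P C).rules) :
    (a = b ∧ rhs = [] ∧ w = 1) ∨
    ∃ X Y β, a = Sum.inl Y ∧ (X, b :: β, w) ∈ P ∧
      rhs = β.map emb ++ [Sum.inl (LCNT.slash a (Sum.inl X))] := by
  simp only [GLCT, Set.mem_union, Set.mem_setOf_eq] at hm
  rcases hm with (((((⟨X, _, h⟩ | ⟨X, α, _, h⟩) | ⟨α, h⟩) | ⟨X, α, β, w', Y, hP, h⟩) |
    ⟨X, rhs', w', _, _, h⟩) | ⟨X, α, β, w', _, _, h⟩) <;>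
    simp only [Prod.mk.injEq] at h
  · exact absurd h.1 (by simp)
  · exact absurd h.1 (by simp)
  · obtain ⟨h1, h2, h3⟩ := h
    injection h1 with e1 e2
    exact Or.inl ⟨e1.trans e2.symm, h2, h3⟩
  · obtain ⟨h1, h2, h3⟩ := h
    injection h1 with e1 e2
    subst e2; subst h3; subst e1
    exact Or.inr ⟨X, Y, β, rfl, hP, h2⟩
  · exact absurd h.1 (by simp)
  · exact absurd h.1 (by simp)

lemma orig_mem_iff {X : N} {rhs : List (GSym (LCNT N T) T)} {w : W} :
    ((LCNT.orig X, rhs, w) : GRule (LCNT N T) T W) ∈ (SPEC G P C).rules ↔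
    ((LCNT.orig X, rhs, w) : GRule (LCNT N T) T W) ∈ (GLCT G P C).rules := by
  simp only [SPEC, GLCT, Set.mem_union, Set.mem_setOf_eq, Prod.mk.injEq]
  constructor <;>
  · rintro (((((h | h) | h) | h) | h) | h)
    · exact Or.inl (Or.inl (Or.inl (Or.inl (Or.inl h))))
    · exact Or.inl (Or.inl (Or.inl (Or.inl (Or.inr h))))
    · exact Or.inl (Or.inl (Or.inl (Or.inr h)))
    · obtain ⟨_, _, _, _, _, _, heq, _⟩ := h
      exact absurd heq (by simp)
    · exact Or.inl (Or.inr h)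
    · exact Or.inr h

lemma frozen_mem_iff {X : N} {rhs : List (GSym (LCNT N T) T)} {w : W} :
    ((LCNT.frozen X, rhs, w) : GRule (LCNT N T) T W) ∈ (SPEC G P C).rules ↔
    ((LCNT.frozen X, rhs, w) : GRule (LCNT N T) T W) ∈ (GLCT G P C).rules := by
  simp only [SPEC, GLCT, Set.mem_union, Set.mem_setOf_eq, Prod.mk.injEq]
  constructor <;>
  · rintro (((((h | h) | h) | h) | h) | h)
    · exact Or.inl (Or.inl (Or.inl (Or.inl (Or.inl h))))
    · exact Or.inl (Or.inl (Or.inl (Or.inl (Or.inr h))))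
    · exact Or.inl (Or.inl (Or.inl (Or.inr h)))
    · obtain ⟨_, _, _, _, _, _, heq, _⟩ := h
      exact absurd heq (by simp)
    · exact Or.inl (Or.inr h)
    · exact Or.inr h

end RuleLemmas

end SpecGlct
namespace SpecGlct

section Eqs

variable {N T W : Type} [One W]

@[simp] lemma numOf_node (fb a b : GSym N T) (w : W) (ts) :
    numOf fb (DTree.node (LCNT.slash a b) w ts) = a := rfl

@[simp] lemma denOf_node (fb a b : GSym N T) (w : W) (ts) :
    denOf fb (DTree.node (LCNT.slash a b) w ts) = b := rfl

lemma fS_leaf (a : T) : fS (DTree.leaf a : DTree (LCNT N T) T W) = DTree.leaf a := by rw [fS]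

lemma fS_orig (X : N) (w : W) (ts) :
    fS (DTree.node (LCNT.orig X) w ts : DTree (LCNT N T) T W)
      = DTree.node (LCNT.orig X) w (ts.map fS) := by
  rw [fS, List.attach_map_val]

lemma fS_frozen (X : N) (w : W) (ts) :
    fS (DTree.node (LCNT.frozen X) w ts : DTree (LCNT N T) T W)
      = DTree.node (LCNT.frozen X) w (ts.map fS) := by
  rw [fS, List.attach_map_val]

lemma fS_slash_nil (n d : GSym N T) (w : W) :
    fS (DTree.node (LCNT.slash n d) w [] : DTree (LCNT N T) T W)
      = DTree.node (LCNT.slash n n) 1 [] := by rw [fS]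

lemma fS_slash_cons (n d : GSym N T) (w : W) (t1 : DTree (LCNT N T) T W) (rest) :
    fS (DTree.node (LCNT.slash n d) w (t1 :: rest))
      = auxS n t1 (DTree.node (LCNT.slash n (numOf n t1)) w
          (rest.map fS ++ [DTree.node (LCNT.slash n n) 1 []])) := by
  rw [fS, List.attach_map_val]

lemma auxS_cons (n₀ n d : GSym N T) (w : W) (t1 : DTree (LCNT N T) T W) (rest acc) :
    auxS n₀ (DTree.node (LCNT.slash n d) w (t1 :: rest)) acc
      = auxS n₀ t1 (DTree.node (LCNT.slash n₀ (numOf n t1)) w (rest.map fS ++ [acc])) := by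
  rw [auxS, List.attach_map_val]

lemma auxS_nil (n₀ n d : GSym N T) (w : W) (acc : DTree (LCNT N T) T W) :
    auxS n₀ (DTree.node (LCNT.slash n d) w []) acc = acc := by
  rw [auxS]
  simp

lemma fS_slash_eq_auxS (n d : GSym N T) (w : W) (cs : List (DTree (LCNT N T) T W)) :
    fS (DTree.node (LCNT.slash n d) w cs)
      = auxS n (DTree.node (LCNT.slash n d) w cs) (DTree.node (LCNT.slash n n) 1 []) := by
  cases cs with
  | nil => rw [fS_slash_nil, auxS_nil]
  | cons t1 rest => rw [fS_slash_cons, auxS_cons]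

lemma hS_leaf (a : T) : hS (DTree.leaf a : DTree (LCNT N T) T W) = DTree.leaf a := by rw [hS]

lemma hS_orig (X : N) (w : W) (ts) :
    hS (DTree.node (LCNT.orig X) w ts : DTree (LCNT N T) T W)
      = DTree.node (LCNT.orig X) w (ts.map hS) := by
  rw [hS, List.attach_map_val]

lemma hS_frozen (X : N) (w : W) (ts) :
    hS (DTree.node (LCNT.frozen X) w ts : DTree (LCNT N T) T W)
      = DTree.node (LCNT.frozen X) w (ts.map hS) := by
  rw [hS, List.attach_map_val]

lemma hS_slash_nil (n d : GSym N T) (w : W) :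
    hS (DTree.node (LCNT.slash n d) w [] : DTree (LCNT N T) T W)
      = DTree.node (LCNT.slash d d) 1 [] := by
  rw [hS]
  split
  · next l hl => simp at hl
  · rfl

lemma hS_slash_concat (n d : GSym N T) (w : W) (init : List (DTree (LCNT N T) T W)) (l) :
    hS (DTree.node (LCNT.slash n d) w (init ++ [l]))
      = auxI d l (DTree.node (LCNT.slash (denOf d l) d) w
          ((DTree.node (LCNT.slash d d) 1 []) :: init.map hS)) := by
  rw [hS]
  split
  · next l' hl =>
      rw [List.getLast?_concat] at hl
      injection hl with hl
      subst hl
      simp only [List.dropLast_concat, List.attach_map_val]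
  · next hl => rw [List.getLast?_concat] at hl; exact absurd hl (by simp)

lemma auxI_nil (y₀ n d : GSym N T) (w : W) (acc : DTree (LCNT N T) T W) :
    auxI y₀ (DTree.node (LCNT.slash n d) w []) acc = acc := by
  rw [auxI]
  simp

lemma auxI_concat (y₀ n d : GSym N T) (w : W) (init : List (DTree (LCNT N T) T W)) (l acc) :
    auxI y₀ (DTree.node (LCNT.slash n d) w (init ++ [l])) acc
      = auxI y₀ l (DTree.node (LCNT.slash (denOf y₀ l) y₀) w (acc :: init.map hS)) := by
  rw [auxI]
  split
  · next l' hl =>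
      rw [List.getLast?_concat] at hl
      injection hl with hl
      subst hl
      simp only [List.dropLast_concat, List.attach_map_val]
  · next hl => rw [List.getLast?_concat] at hl; exact absurd hl (by simp)

lemma hS_slash_eq_auxI (n d : GSym N T) (w : W) (cs : List (DTree (LCNT N T) T W)) :
    hS (DTree.node (LCNT.slash n d) w cs)
      = auxI d (DTree.node (LCNT.slash n d) w cs) (DTree.node (LCNT.slash d d) 1 []) := by
  rcases List.eq_nil_or_concat cs with rfl | ⟨init, l, rfl⟩
  · rw [hS_slash_nil, auxI_nil]
  · rw [List.concat_eq_append, hS_slash_concat, auxI_concat]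

lemma substBase_cons (n d : GSym N T) (w : W) (t1 : DTree (LCNT N T) T W) (rest s) :
    substBase (DTree.node (LCNT.slash n d) w (t1 :: rest)) s
      = DTree.node (LCNT.slash n d) w (substBase t1 s :: rest) := by
  rw [substBase]

lemma substBase_nil (n d : GSym N T) (w : W) (s : DTree (LCNT N T) T W) :
    substBase (DTree.node (LCNT.slash n d) w []) s = s := by
  rw [substBase]
  simp

lemma substLast_concat (n d : GSym N T) (w : W) (init : List (DTree (LCNT N T) T W)) (l s) :
    substLast (DTree.node (LCNT.slash n d) w (init ++ [l])) s
      = DTree.node (LCNT.slash n d) w (init ++ [substLast l s]) := by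
  rw [substLast]
  split
  · next l' hl =>
      rw [List.getLast?_concat] at hl
      injection hl with hl
      subst hl
      simp only [List.dropLast_concat]
  · next hl => rw [List.getLast?_concat] at hl; exact absurd hl (by simp)

lemma substLast_nil (n d : GSym N T) (w : W) (s : DTree (LCNT N T) T W) :
    substLast (DTree.node (LCNT.slash n d) w []) s = s := by
  rw [substLast]
  simp

end Eqs

end SpecGlct
namespace SpecGlct

section Spine

variable {N T W : Type} [One W] {G : WCFG N T W} {P : Set (GRule N T W)} {C : Set (GSym N T)}

lemma glct_spine_wf {X : N} {α : GSym N T} {β : List (GSym N T)} {w : W} (Y : N)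
    (hp : (X, α :: β, w) ∈ P) {rest' : List (DTree (LCNT N T) T W)}
    (hlab : rest'.map DTree.label = (β.map emb).map some)
    (hwf : ∀ r ∈ rest', r.WF (GLCT G P C)) {acc : DTree (LCNT N T) T W}
    (haccwf : acc.WF (GLCT G P C))
    (hacclab : acc.label = some (Sum.inl (LCNT.slash (Sum.inl Y) (Sum.inl X)))) :
    (DTree.node (LCNT.slash (Sum.inl Y) α) w (rest' ++ [acc])).WF (GLCT G P C) := by
  refine DTree.WF.node ⟨_, glct_rec_mem Y hp, ?_⟩ ?_
  · rw [List.map_append, hlab, List.map_append]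
    simp [hacclab]
  · intro r hr
    rcases List.mem_append.mp hr with h | h
    · exact hwf r h
    · rw [List.mem_singleton] at h; subst h; exact haccwf

lemma spec_spine_wf {X : N} {α : GSym N T} {β : List (GSym N T)} {w : W} (y : GSym N T)
    (hp : (X, α :: β, w) ∈ P) {c : DTree (LCNT N T) T W}
    (hcwf : c.WF (SPEC G P C)) (hclab : c.label = some (Sum.inl (LCNT.slash α y)))
    {rest' : List (DTree (LCNT N T) T W)}
    (hlab : rest'.map DTree.label = (β.map emb).map some)
    (hwf : ∀ r ∈ rest', r.WF (SPEC G P C)) :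
    (DTree.node (LCNT.slash (Sum.inl X) y) w (c :: rest')).WF (SPEC G P C) := by
  refine DTree.WF.node ⟨_, spec_rec_mem y hp, ?_⟩ ?_
  · rw [List.map_cons, hlab, List.map_cons]
    simp [hclab]
  · intro r hr
    rcases List.mem_cons.mp hr with h | h
    · subst h; exact hcwf
    · exact hwf r h

lemma glct_base_wf (a : GSym N T) :
    (DTree.node (LCNT.slash a a) 1 [] : DTree (LCNT N T) T W).WF (GLCT G P C) :=
  DTree.WF.node ⟨[], glct_base_mem a, by simp⟩ (by simp)

lemma spec_base_wf (a : GSym N T) :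
    (DTree.node (LCNT.slash a a) 1 [] : DTree (LCNT N T) T W).WF (SPEC G P C) :=
  DTree.WF.node ⟨[], spec_base_mem a, by simp⟩ (by simp)

end Spine

end SpecGlct
namespace SpecGlct

section Master

variable {N T W : Type} [CommSemiring W] (G : WCFG N T W) (P : Set (GRule N T W)) (C : Set (GSym N T))

/-- The bundle of statements proved by simultaneous strong induction. -/
def Stmts (t : DTree (LCNT N T) T W) : Prop :=
  (t.WF (SPEC G P C) → (fS t).WF (GLCT G P C) ∧ (fS t).label = t.label ∧
    (fS t).yield = t.yield ∧ (fS t).weight = t.weight) ∧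
  (∀ (a y n₀ : GSym N T) (acc : DTree (LCNT N T) T W),
    t.WF (SPEC G P C) → t.label = some (Sum.inl (LCNT.slash a y)) →
    acc.WF (GLCT G P C) → acc.label = some (Sum.inl (LCNT.slash n₀ a)) →
    (∃ Y : N, n₀ = Sum.inl Y) →
    (auxS n₀ t acc).WF (GLCT G P C) ∧
    (auxS n₀ t acc).label = some (Sum.inl (LCNT.slash n₀ y)) ∧
    (auxS n₀ t acc).yield = t.yield ++ acc.yield ∧
    (auxS n₀ t acc).weight = t.weight * acc.weight) ∧
  (t.WF (GLCT G P C) → (hS t).WF (SPEC G P C) ∧ (hS t).label = t.label ∧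
    (hS t).yield = t.yield ∧ (hS t).weight = t.weight) ∧
  (∀ (n₀ b y : GSym N T) (acc : DTree (LCNT N T) T W),
    t.WF (GLCT G P C) → t.label = some (Sum.inl (LCNT.slash n₀ b)) →
    acc.WF (SPEC G P C) → acc.label = some (Sum.inl (LCNT.slash b y)) →
    (auxI y t acc).WF (SPEC G P C) ∧
    (auxI y t acc).label = some (Sum.inl (LCNT.slash n₀ y)) ∧
    (auxI y t acc).yield = acc.yield ++ t.yield ∧
    (auxI y t acc).weight = acc.weight * t.weight) ∧
  (t.WF (SPEC G P C) → hS (fS t) = t) ∧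
  (∀ (a y n₀ : GSym N T) (acc s : DTree (LCNT N T) T W),
    t.WF (SPEC G P C) → t.label = some (Sum.inl (LCNT.slash a y)) →
    acc.label = some (Sum.inl (LCNT.slash n₀ a)) →
    auxI y (auxS n₀ t acc) s = auxI y acc (substBase t s)) ∧
  (t.WF (GLCT G P C) → fS (hS t) = t) ∧
  (∀ (n₀ b y : GSym N T) (acc s : DTree (LCNT N T) T W),
    t.WF (GLCT G P C) → t.label = some (Sum.inl (LCNT.slash n₀ b)) →
    acc.label = some (Sum.inl (LCNT.slash b y)) →
    auxS n₀ (auxI y t acc) s = auxS n₀ acc (substLast t s)) ∧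
  (∀ (a d : GSym N T), t.WF (SPEC G P C) → t.label = some (Sum.inl (LCNT.slash a d)) →
    substBase t (DTree.node (LCNT.slash d d) 1 []) = t) ∧
  (∀ (n b : GSym N T), t.WF (GLCT G P C) → t.label = some (Sum.inl (LCNT.slash n b)) →
    substLast t (DTree.node (LCNT.slash n n) 1 []) = t)

theorem master : ∀ (nn : ℕ) (t : DTree (LCNT N T) T W), sizeOf t ≤ nn → Stmts G P C t := by
  intro nn
  induction nn with
  | zero =>
    intro t ht
    exfalso
    cases t <;> simp only [DTree.leaf.sizeOf_spec, DTree.gap.sizeOf_spec,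
      DTree.node.sizeOf_spec, Nat.le_zero] at ht <;> omega
  | succ m IH =>
    intro t ht
    cases t with
    | leaf a =>
      refine ⟨?_, ?_, ?_, ?_, ?_, ?_, ?_, ?_, ?_, ?_⟩
      · intro _; rw [fS_leaf]; exact ⟨DTree.WF.leaf a, rfl, rfl, rfl⟩
      · intro _ _ _ _ _ hlab; simp at hlab
      · intro _; rw [hS_leaf]; exact ⟨DTree.WF.leaf a, rfl, rfl, rfl⟩
      · intro _ _ _ _ _ hlab; simp at hlab
      · intro _; rw [fS_leaf, hS_leaf]
      · intro _ _ _ _ _ _ hlab; simp at hlab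
      · intro _; rw [hS_leaf, fS_leaf]
      · intro _ _ _ _ _ _ hlab; simp at hlab
      · intro _ _ _ hlab; simp at hlab
      · intro _ _ _ hlab; simp at hlab
    | gap =>
      refine ⟨?_, ?_, ?_, ?_, ?_, ?_, ?_, ?_, ?_, ?_⟩
      · intro hWF; cases hWF
      · intro _ _ _ _ hWF; cases hWF
      · intro hWF; cases hWF
      · intro _ _ _ _ hWF; cases hWF
      · intro hWF; cases hWF
      · intro _ _ _ _ _ hWF; cases hWF
      · intro hWF; cases hWF
      · intro _ _ _ _ _ hWF; cases hWF
      · intro _ _ hWF; cases hWF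
      · intro _ _ hWF; cases hWF
    | node L w ts =>
      have hch : ∀ s ∈ ts, Stmts G P C s := by
        intro s hs
        refine IH s ?_
        have h1 := List.sizeOf_lt_of_mem hs
        simp only [DTree.node.sizeOf_spec] at ht
        omega
      cases L with
      | orig X =>
        refine ⟨?_, ?_, ?_, ?_, ?_, ?_, ?_, ?_, ?_, ?_⟩
        · intro hWF
          obtain ⟨⟨rhs, hmem, hlab⟩, hts⟩ := wf_node_inv hWF
          rw [fS_orig]
          have hlabs : (ts.map fS).map DTree.label = ts.map DTree.label := by
            rw [List.map_map]
            exact List.map_congr_left fun r hr => ((hch r hr).1 (hts r hr)).2.1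
          refine ⟨DTree.WF.node ⟨rhs, orig_mem_iff.mp hmem, by rw [hlabs, hlab]⟩ ?_, rfl, ?_, ?_⟩
          · intro r hr
            obtain ⟨r', hr', rfl⟩ := List.mem_map.mp hr
            exact ((hch r' hr').1 (hts r' hr')).1
          · simp only [yield_node]
            congr 1
            rw [List.map_map]
            exact List.map_congr_left fun r hr => ((hch r hr).1 (hts r hr)).2.2.1
          · simp only [weight_node]
            congr 1
            congr 1
            rw [List.map_map]
            exact List.map_congr_left fun r hr => ((hch r hr).1 (hts r hr)).2.2.2
        · intro _ _ _ _ _ hlab _ _ _; simp at hlab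
        · intro hWF
          obtain ⟨⟨rhs, hmem, hlab⟩, hts⟩ := wf_node_inv hWF
          rw [hS_orig]
          have hlabs : (ts.map hS).map DTree.label = ts.map DTree.label := by
            rw [List.map_map]
            exact List.map_congr_left fun r hr => ((hch r hr).2.2.1 (hts r hr)).2.1
          refine ⟨DTree.WF.node ⟨rhs, orig_mem_iff.mpr hmem, by rw [hlabs, hlab]⟩ ?_, rfl, ?_, ?_⟩
          · intro r hr
            obtain ⟨r', hr', rfl⟩ := List.mem_map.mp hr
            exact ((hch r' hr').2.2.1 (hts r' hr')).1
          · simp only [yield_node]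
            congr 1
            rw [List.map_map]
            exact List.map_congr_left fun r hr => ((hch r hr).2.2.1 (hts r hr)).2.2.1
          · simp only [weight_node]
            congr 1
            congr 1
            rw [List.map_map]
            exact List.map_congr_left fun r hr => ((hch r hr).2.2.1 (hts r hr)).2.2.2
        · intro _ _ _ _ _ hlab _ _; simp at hlab
        · intro hWF
          obtain ⟨⟨rhs, hmem, hlab⟩, hts⟩ := wf_node_inv hWF
          rw [fS_orig, hS_orig, List.map_map]
          congr 1
          rw [show ts.map (hS ∘ fS) = ts.map id from
            List.map_congr_left fun r hr => ((hch r hr).2.2.2.2.1 (hts r hr)), List.map_id]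
        · intro _ _ _ _ _ _ hlab _; simp at hlab
        · intro hWF
          obtain ⟨⟨rhs, hmem, hlab⟩, hts⟩ := wf_node_inv hWF
          rw [hS_orig, fS_orig, List.map_map]
          congr 1
          rw [show ts.map (fS ∘ hS) = ts.map id from
            List.map_congr_left fun r hr => ((hch r hr).2.2.2.2.2.2.1 (hts r hr)), List.map_id]
        · intro _ _ _ _ _ _ hlab _; simp at hlab
        · intro _ _ _ hlab; simp at hlab
        · intro _ _ _ hlab; simp at hlab
      | frozen X =>
        refine ⟨?_, ?_, ?_, ?_, ?_, ?_, ?_, ?_, ?_, ?_⟩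
        · intro hWF
          obtain ⟨⟨rhs, hmem, hlab⟩, hts⟩ := wf_node_inv hWF
          rw [fS_frozen]
          have hlabs : (ts.map fS).map DTree.label = ts.map DTree.label := by
            rw [List.map_map]
            exact List.map_congr_left fun r hr => ((hch r hr).1 (hts r hr)).2.1
          refine ⟨DTree.WF.node ⟨rhs, frozen_mem_iff.mp hmem, by rw [hlabs, hlab]⟩ ?_, rfl, ?_, ?_⟩
          · intro r hr
            obtain ⟨r', hr', rfl⟩ := List.mem_map.mp hr
            exact ((hch r' hr').1 (hts r' hr')).1
          · simp only [yield_node]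
            congr 1
            rw [List.map_map]
            exact List.map_congr_left fun r hr => ((hch r hr).1 (hts r hr)).2.2.1
          · simp only [weight_node]
            congr 1
            congr 1
            rw [List.map_map]
            exact List.map_congr_left fun r hr => ((hch r hr).1 (hts r hr)).2.2.2
        · intro _ _ _ _ _ hlab _ _ _; simp at hlab
        · intro hWF
          obtain ⟨⟨rhs, hmem, hlab⟩, hts⟩ := wf_node_inv hWF
          rw [hS_frozen]
          have hlabs : (ts.map hS).map DTree.label = ts.map DTree.label := by
            rw [List.map_map]
            exact List.map_congr_left fun r hr => ((hch r hr).2.2.1 (hts r hr)).2.1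
          refine ⟨DTree.WF.node ⟨rhs, frozen_mem_iff.mpr hmem, by rw [hlabs, hlab]⟩ ?_, rfl, ?_, ?_⟩
          · intro r hr
            obtain ⟨r', hr', rfl⟩ := List.mem_map.mp hr
            exact ((hch r' hr').2.2.1 (hts r' hr')).1
          · simp only [yield_node]
            congr 1
            rw [List.map_map]
            exact List.map_congr_left fun r hr => ((hch r hr).2.2.1 (hts r hr)).2.2.1
          · simp only [weight_node]
            congr 1
            congr 1
            rw [List.map_map]
            exact List.map_congr_left fun r hr => ((hch r hr).2.2.1 (hts r hr)).2.2.2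
        · intro _ _ _ _ _ hlab _ _; simp at hlab
        · intro hWF
          obtain ⟨⟨rhs, hmem, hlab⟩, hts⟩ := wf_node_inv hWF
          rw [fS_frozen, hS_frozen, List.map_map]
          congr 1
          rw [show ts.map (hS ∘ fS) = ts.map id from
            List.map_congr_left fun r hr => ((hch r hr).2.2.2.2.1 (hts r hr)), List.map_id]
        · intro _ _ _ _ _ _ hlab _; simp at hlab
        · intro hWF
          obtain ⟨⟨rhs, hmem, hlab⟩, hts⟩ := wf_node_inv hWF
          rw [hS_frozen, fS_frozen, List.map_map]
          congr 1
          rw [show ts.map (fS ∘ hS) = ts.map id from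
            List.map_congr_left fun r hr => ((hch r hr).2.2.2.2.2.2.1 (hts r hr)), List.map_id]
        · intro _ _ _ _ _ _ hlab _; simp at hlab
        · intro _ _ _ hlab; simp at hlab
        · intro _ _ _ hlab; simp at hlab
      | slash nu de =>
        have hsInv : (DTree.node (LCNT.slash nu de) w ts).WF (SPEC G P C) →
            (nu = de ∧ w = 1 ∧ ts = []) ∨
            ∃ X α β t1 rest, nu = Sum.inl X ∧ (X, α :: β, w) ∈ P ∧ ts = t1 :: rest ∧
              t1.label = some (Sum.inl (LCNT.slash α de)) ∧
              rest.map DTree.label = (β.map emb).map some := by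
          intro hWF
          obtain ⟨⟨rhs, hmem, hlab⟩, _⟩ := wf_node_inv hWF
          rcases spec_slash_inv hmem with ⟨h1, h2, h3⟩ | ⟨X, α, β, h1, h2, h3⟩
          · subst h2
            refine Or.inl ⟨h1, h3, (List.map_eq_nil_iff (f := DTree.label)).mp (by simpa using hlab)⟩
          · subst h3
            obtain ⟨t1, rest, rfl, hl1, hlr⟩ := map_label_cons hlab
            exact Or.inr ⟨X, α, β, t1, rest, h1, h2, rfl, hl1, hlr⟩
        have hgInv : (DTree.node (LCNT.slash nu de) w ts).WF (GLCT G P C) →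
            (nu = de ∧ w = 1 ∧ ts = []) ∨
            ∃ X Y β init l, nu = Sum.inl Y ∧ (X, de :: β, w) ∈ P ∧ ts = init ++ [l] ∧
              l.label = some (Sum.inl (LCNT.slash nu (Sum.inl X))) ∧
              init.map DTree.label = (β.map emb).map some := by
          intro hWF
          obtain ⟨⟨rhs, hmem, hlab⟩, _⟩ := wf_node_inv hWF
          rcases glct_slash_inv hmem with ⟨h1, h2, h3⟩ | ⟨X, Y, β, h1, h2, h3⟩
          · subst h2
            refine Or.inl ⟨h1, h3, (List.map_eq_nil_iff (f := DTree.label)).mp (by simpa using hlab)⟩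
          · subst h3
            obtain ⟨init, l, rfl, hli, hll⟩ := map_label_concat hlab
            exact Or.inr ⟨X, Y, β, init, l, h1, h2, rfl, hll, hli⟩
        refine ⟨?_, ?_, ?_, ?_, ?_, ?_, ?_, ?_, ?_, ?_⟩
        · -- F
          intro hWF
          have hts := (wf_node_inv hWF).2
          rcases hsInv hWF with ⟨h1, h2, h3⟩ | ⟨X, α, β, t1, rest, h1, h2, h3, h4, h5⟩
          · subst h3; subst h2; subst h1
            rw [fS_slash_nil]
            exact ⟨glct_base_wf nu, rfl, rfl, rfl⟩
          · subst h3; subst h1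
            have ht1 : Stmts G P C t1 := hch t1 (List.mem_cons_self)
            have hrest : ∀ r ∈ rest, Stmts G P C r :=
              fun r hr => hch r (List.mem_cons_of_mem _ hr)
            have ht1WF : t1.WF (SPEC G P C) := hts t1 (List.mem_cons_self)
            have hrestWF : ∀ r ∈ rest, r.WF (SPEC G P C) :=
              fun r hr => hts r (List.mem_cons_of_mem _ hr)
            obtain ⟨w1, ts1, rfl⟩ := node_of_label h4
            have hrlab : (rest.map fS).map DTree.label = (β.map emb).map some := by
              rw [List.map_map, ← h5]
              exact List.map_congr_left fun r hr => ((hrest r hr).1 (hrestWF r hr)).2.1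
            have hrwf : ∀ r ∈ rest.map fS, r.WF (GLCT G P C) := by
              intro r hr
              obtain ⟨r', hr', rfl⟩ := List.mem_map.mp hr
              exact ((hrest r' hr').1 (hrestWF r' hr')).1
            have hA0WF : (DTree.node (LCNT.slash (Sum.inl X) α) w
                (rest.map fS ++ [DTree.node (LCNT.slash (Sum.inl X) (Sum.inl X)) 1 []])).WF
                (GLCT G P C) :=
              glct_spine_wf X h2 hrlab hrwf (glct_base_wf _) (by simp)
            have hA := ht1.2.1 α de (Sum.inl X) _ ht1WF (by simp) hA0WF (by simp) ⟨X, rfl⟩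
            rw [fS_slash_cons, numOf_node]
            refine ⟨hA.1, by rw [hA.2.1]; simp, ?_, ?_⟩
            · rw [hA.2.2.1]
              simp only [yield_node, List.map_append, List.map_cons, List.map_nil,
                List.flatten_append, List.flatten_cons, List.flatten_nil, List.append_nil,
                List.map_map]
              have hy : List.map (DTree.yield ∘ fS) rest = List.map DTree.yield rest :=
                List.map_congr_left fun r hr => ((hrest r hr).1 (hrestWF r hr)).2.2.1
              rw [hy]
            · rw [hA.2.2.2]
              simp only [weight_node, List.map_append, List.map_cons, List.map_nil,
                List.prod_append, List.prod_cons, List.prod_nil, List.map_map]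
              have hw : List.map (DTree.weight ∘ fS) rest = List.map DTree.weight rest :=
                List.map_congr_left fun r hr => ((hrest r hr).1 (hrestWF r hr)).2.2.2
              rw [hw]
              ring
        · -- A
          intro a y n₀ acc hWF hlab haccWF hacclab hn₀
          simp only [label_node, Option.some.injEq, Sum.inl.injEq, LCNT.slash.injEq] at hlab
          obtain ⟨rfl, rfl⟩ := hlab
          have hts := (wf_node_inv hWF).2
          rcases hsInv hWF with ⟨h1, h2, h3⟩ | ⟨X, α, β, t1, rest, h1, h2, h3, h4, h5⟩
          · subst h3; subst h2; subst h1
            rw [auxS_nil]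
            exact ⟨haccWF, by rw [hacclab], by simp, by simp⟩
          · subst h3; subst h1
            obtain ⟨Y, rfl⟩ := hn₀
            have ht1 : Stmts G P C t1 := hch t1 (List.mem_cons_self)
            have hrest : ∀ r ∈ rest, Stmts G P C r :=
              fun r hr => hch r (List.mem_cons_of_mem _ hr)
            have ht1WF : t1.WF (SPEC G P C) := hts t1 (List.mem_cons_self)
            have hrestWF : ∀ r ∈ rest, r.WF (SPEC G P C) :=
              fun r hr => hts r (List.mem_cons_of_mem _ hr)
            obtain ⟨w1, ts1, rfl⟩ := node_of_label h4
            have hrlab : (rest.map fS).map DTree.label = (β.map emb).map some := by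
              rw [List.map_map, ← h5]
              exact List.map_congr_left fun r hr => ((hrest r hr).1 (hrestWF r hr)).2.1
            have hrwf : ∀ r ∈ rest.map fS, r.WF (GLCT G P C) := by
              intro r hr
              obtain ⟨r', hr', rfl⟩ := List.mem_map.mp hr
              exact ((hrest r' hr').1 (hrestWF r' hr')).1
            have hA0WF : (DTree.node (LCNT.slash (Sum.inl Y) α) w
                (rest.map fS ++ [acc])).WF (GLCT G P C) :=
              glct_spine_wf Y h2 hrlab hrwf haccWF hacclab
            have hA := ht1.2.1 α de (Sum.inl Y) _ ht1WF (by simp) hA0WF (by simp) ⟨Y, rfl⟩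
            rw [auxS_cons, numOf_node]
            refine ⟨hA.1, by rw [hA.2.1], ?_, ?_⟩
            · rw [hA.2.2.1]
              simp only [yield_node, List.map_append, List.map_cons, List.map_nil,
                List.flatten_append, List.flatten_cons, List.flatten_nil, List.append_nil,
                List.map_map]
              have hy : List.map (DTree.yield ∘ fS) rest = List.map DTree.yield rest :=
                List.map_congr_left fun r hr => ((hrest r hr).1 (hrestWF r hr)).2.2.1
              rw [hy, List.append_assoc]
            · rw [hA.2.2.2]
              simp only [weight_node, List.map_append, List.map_cons, List.map_nil,
                List.prod_append, List.prod_cons, List.prod_nil, List.map_map]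
              have hw : List.map (DTree.weight ∘ fS) rest = List.map DTree.weight rest :=
                List.map_congr_left fun r hr => ((hrest r hr).1 (hrestWF r hr)).2.2.2
              rw [hw]
              ring
        · -- H
          intro hWF
          have hts := (wf_node_inv hWF).2
          rcases hgInv hWF with ⟨h1, h2, h3⟩ | ⟨X, Y, β, init, l, h1, h2, h3, h4, h5⟩
          · subst h3; subst h2; subst h1
            rw [hS_slash_nil]
            exact ⟨spec_base_wf nu, rfl, rfl, rfl⟩
          · subst h3; subst h1
            have hl : Stmts G P C l := hch l (by simp)
            have hinit : ∀ r ∈ init, Stmts G P C r := fun r hr => hch r (by simp [hr])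
            have hlWF : l.WF (GLCT G P C) := hts l (by simp)
            have hinitWF : ∀ r ∈ init, r.WF (GLCT G P C) := fun r hr => hts r (by simp [hr])
            obtain ⟨wl, tsl, rfl⟩ := node_of_label h4
            have hilab : (init.map hS).map DTree.label = (β.map emb).map some := by
              rw [List.map_map, ← h5]
              exact List.map_congr_left fun r hr => ((hinit r hr).2.2.1 (hinitWF r hr)).2.1
            have hiwf : ∀ r ∈ init.map hS, r.WF (SPEC G P C) := by
              intro r hr
              obtain ⟨r', hr', rfl⟩ := List.mem_map.mp hr
              exact ((hinit r' hr').2.2.1 (hinitWF r' hr')).1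
            have hA2WF : (DTree.node (LCNT.slash (Sum.inl X) de) w
                ((DTree.node (LCNT.slash de de) 1 []) :: init.map hS)).WF (SPEC G P C) :=
              spec_spine_wf de h2 (spec_base_wf de) (by simp) hilab hiwf
            have hB := hl.2.2.2.1 (Sum.inl Y) (Sum.inl X) de _ hlWF (by simp) hA2WF (by simp)
            rw [hS_slash_concat, denOf_node]
            refine ⟨hB.1, by rw [hB.2.1]; rfl, ?_, ?_⟩
            · rw [hB.2.2.1]
              simp only [yield_node, List.map_append, List.map_cons, List.map_nil,
                List.flatten_append, List.flatten_cons, List.flatten_nil, List.append_nil,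
                List.nil_append, List.map_map]
              have hy : List.map (DTree.yield ∘ hS) init = List.map DTree.yield init :=
                List.map_congr_left fun r hr => ((hinit r hr).2.2.1 (hinitWF r hr)).2.2.1
              rw [hy]
            · rw [hB.2.2.2]
              simp only [weight_node, List.map_append, List.map_cons, List.map_nil,
                List.prod_append, List.prod_cons, List.prod_nil, List.map_map]
              have hw : List.map (DTree.weight ∘ hS) init = List.map DTree.weight init :=
                List.map_congr_left fun r hr => ((hinit r hr).2.2.1 (hinitWF r hr)).2.2.2
              rw [hw]
              ring
        · -- B
          intro n₀ b y acc hWF hlab haccWF hacclab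
          simp only [label_node, Option.some.injEq, Sum.inl.injEq, LCNT.slash.injEq] at hlab
          obtain ⟨rfl, rfl⟩ := hlab
          have hts := (wf_node_inv hWF).2
          rcases hgInv hWF with ⟨h1, h2, h3⟩ | ⟨X, Y, β, init, l, h1, h2, h3, h4, h5⟩
          · subst h3; subst h2; subst h1
            rw [auxI_nil]
            exact ⟨haccWF, by rw [hacclab], by simp, by simp⟩
          · subst h3
            have hl : Stmts G P C l := hch l (by simp)
            have hinit : ∀ r ∈ init, Stmts G P C r := fun r hr => hch r (by simp [hr])
            have hlWF : l.WF (GLCT G P C) := hts l (by simp)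
            have hinitWF : ∀ r ∈ init, r.WF (GLCT G P C) := fun r hr => hts r (by simp [hr])
            obtain ⟨wl, tsl, rfl⟩ := node_of_label h4
            have hilab : (init.map hS).map DTree.label = (β.map emb).map some := by
              rw [List.map_map, ← h5]
              exact List.map_congr_left fun r hr => ((hinit r hr).2.2.1 (hinitWF r hr)).2.1
            have hiwf : ∀ r ∈ init.map hS, r.WF (SPEC G P C) := by
              intro r hr
              obtain ⟨r', hr', rfl⟩ := List.mem_map.mp hr
              exact ((hinit r' hr').2.2.1 (hinitWF r' hr')).1
            have hA2WF : (DTree.node (LCNT.slash (Sum.inl X) y) w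
                (acc :: init.map hS)).WF (SPEC G P C) :=
              spec_spine_wf y h2 haccWF hacclab hilab hiwf
            have hB := hl.2.2.2.1 nu (Sum.inl X) y _ hlWF (by simp) hA2WF (by simp)
            rw [auxI_concat, denOf_node]
            refine ⟨hB.1, by rw [hB.2.1], ?_, ?_⟩
            · rw [hB.2.2.1]
              simp only [yield_node, List.map_append, List.map_cons, List.map_nil,
                List.flatten_append, List.flatten_cons, List.flatten_nil, List.append_nil,
                List.nil_append, List.map_map]
              have hy : List.map (DTree.yield ∘ hS) init = List.map DTree.yield init :=
                List.map_congr_left fun r hr => ((hinit r hr).2.2.1 (hinitWF r hr)).2.2.1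
              rw [hy, List.append_assoc]
            · rw [hB.2.2.2]
              simp only [weight_node, List.map_append, List.map_cons, List.map_nil,
                List.prod_append, List.prod_cons, List.prod_nil, List.map_map]
              have hw : List.map (DTree.weight ∘ hS) init = List.map DTree.weight init :=
                List.map_congr_left fun r hr => ((hinit r hr).2.2.1 (hinitWF r hr)).2.2.2
              rw [hw]
              ring
        · -- RTf
          intro hWF
          have hts := (wf_node_inv hWF).2
          rcases hsInv hWF with ⟨h1, h2, h3⟩ | ⟨X, α, β, t1, rest, h1, h2, h3, h4, h5⟩
          · subst h3; subst h2; subst h1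
            rw [fS_slash_nil, hS_slash_nil]
          · subst h3; subst h1
            have ht1 : Stmts G P C t1 := hch t1 (List.mem_cons_self)
            have hrest : ∀ r ∈ rest, Stmts G P C r :=
              fun r hr => hch r (List.mem_cons_of_mem _ hr)
            have ht1WF : t1.WF (SPEC G P C) := hts t1 (List.mem_cons_self)
            have hrestWF : ∀ r ∈ rest, r.WF (SPEC G P C) :=
              fun r hr => hts r (List.mem_cons_of_mem _ hr)
            obtain ⟨w1, ts1, rfl⟩ := node_of_label h4
            have hrlab : (rest.map fS).map DTree.label = (β.map emb).map some := by
              rw [List.map_map, ← h5]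
              exact List.map_congr_left fun r hr => ((hrest r hr).1 (hrestWF r hr)).2.1
            have hrwf : ∀ r ∈ rest.map fS, r.WF (GLCT G P C) := by
              intro r hr
              obtain ⟨r', hr', rfl⟩ := List.mem_map.mp hr
              exact ((hrest r' hr').1 (hrestWF r' hr')).1
            have hA0WF : (DTree.node (LCNT.slash (Sum.inl X) α) w
                (rest.map fS ++ [DTree.node (LCNT.slash (Sum.inl X) (Sum.inl X)) 1 []])).WF
                (GLCT G P C) :=
              glct_spine_wf X h2 hrlab hrwf (glct_base_wf _) (by simp)
            have hA := ht1.2.1 α de (Sum.inl X) _ ht1WF (by simp) hA0WF (by simp) ⟨X, rfl⟩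
            rw [fS_slash_cons, numOf_node]
            obtain ⟨w2, cs2, hfs⟩ := node_of_label hA.2.1
            rw [hfs, hS_slash_eq_auxI, ← hfs]
            rw [ht1.2.2.2.2.2.1 α de (Sum.inl X) _ _ ht1WF (by simp) (by simp)]
            rw [ht1.2.2.2.2.2.2.2.2.1 α de ht1WF (by simp)]
            rw [auxI_concat, denOf_node, auxI_nil]
            have hmaps : (rest.map fS).map hS = rest := by
              rw [List.map_map]
              conv_rhs => rw [← List.map_id rest]
              exact List.map_congr_left fun r hr => (hrest r hr).2.2.2.2.1 (hrestWF r hr)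
            rw [hmaps]
        · -- RT1
          intro a y n₀ acc s hWF hlab hacclab
          simp only [label_node, Option.some.injEq, Sum.inl.injEq, LCNT.slash.injEq] at hlab
          obtain ⟨rfl, rfl⟩ := hlab
          have hts := (wf_node_inv hWF).2
          rcases hsInv hWF with ⟨h1, h2, h3⟩ | ⟨X, α, β, t1, rest, h1, h2, h3, h4, h5⟩
          · subst h3; subst h2; subst h1
            rw [auxS_nil, substBase_nil]
          · subst h3; subst h1
            have ht1 : Stmts G P C t1 := hch t1 (List.mem_cons_self)
            have hrest : ∀ r ∈ rest, Stmts G P C r :=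
              fun r hr => hch r (List.mem_cons_of_mem _ hr)
            have ht1WF : t1.WF (SPEC G P C) := hts t1 (List.mem_cons_self)
            have hrestWF : ∀ r ∈ rest, r.WF (SPEC G P C) :=
              fun r hr => hts r (List.mem_cons_of_mem _ hr)
            obtain ⟨w1, ts1, rfl⟩ := node_of_label h4
            rw [auxS_cons, numOf_node]
            rw [ht1.2.2.2.2.2.1 α de n₀ _ s ht1WF (by simp) (by simp)]
            obtain ⟨wa, tsa, rfl⟩ := node_of_label hacclab
            rw [auxI_concat, denOf_node, substBase_cons]
            have hmaps : (rest.map fS).map hS = rest := by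
              rw [List.map_map]
              conv_rhs => rw [← List.map_id rest]
              exact List.map_congr_left fun r hr => (hrest r hr).2.2.2.2.1 (hrestWF r hr)
            rw [hmaps]
        · -- RTh
          intro hWF
          have hts := (wf_node_inv hWF).2
          rcases hgInv hWF with ⟨h1, h2, h3⟩ | ⟨X, Y, β, init, l, h1, h2, h3, h4, h5⟩
          · subst h3; subst h2; subst h1
            rw [hS_slash_nil, fS_slash_nil]
          · subst h3; subst h1
            have hl : Stmts G P C l := hch l (by simp)
            have hinit : ∀ r ∈ init, Stmts G P C r := fun r hr => hch r (by simp [hr])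
            have hlWF : l.WF (GLCT G P C) := hts l (by simp)
            have hinitWF : ∀ r ∈ init, r.WF (GLCT G P C) := fun r hr => hts r (by simp [hr])
            obtain ⟨wl, tsl, rfl⟩ := node_of_label h4
            have hilab : (init.map hS).map DTree.label = (β.map emb).map some := by
              rw [List.map_map, ← h5]
              exact List.map_congr_left fun r hr => ((hinit r hr).2.2.1 (hinitWF r hr)).2.1
            have hiwf : ∀ r ∈ init.map hS, r.WF (SPEC G P C) := by
              intro r hr
              obtain ⟨r', hr', rfl⟩ := List.mem_map.mp hr
              exact ((hinit r' hr').2.2.1 (hinitWF r' hr')).1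
            have hA2WF : (DTree.node (LCNT.slash (Sum.inl X) de) w
                ((DTree.node (LCNT.slash de de) 1 []) :: init.map hS)).WF (SPEC G P C) :=
              spec_spine_wf de h2 (spec_base_wf de) (by simp) hilab hiwf
            have hB := hl.2.2.2.1 (Sum.inl Y) (Sum.inl X) de _ hlWF (by simp) hA2WF (by simp)
            rw [hS_slash_concat, denOf_node]
            obtain ⟨w2, cs2, hhs⟩ := node_of_label hB.2.1
            rw [hhs, fS_slash_eq_auxS, ← hhs]
            rw [hl.2.2.2.2.2.2.2.1 (Sum.inl Y) (Sum.inl X) de _ _ hlWF (by simp) (by simp)]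
            rw [hl.2.2.2.2.2.2.2.2.2 (Sum.inl Y) (Sum.inl X) hlWF (by simp)]
            rw [auxS_cons, numOf_node, auxS_nil]
            have hmaps : (init.map hS).map fS = init := by
              rw [List.map_map]
              conv_rhs => rw [← List.map_id init]
              exact List.map_congr_left fun r hr => (hinit r hr).2.2.2.2.2.2.1 (hinitWF r hr)
            rw [hmaps]
        · -- RT2
          intro n₀ b y acc s hWF hlab hacclab
          simp only [label_node, Option.some.injEq, Sum.inl.injEq, LCNT.slash.injEq] at hlab
          obtain ⟨rfl, rfl⟩ := hlab
          have hts := (wf_node_inv hWF).2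
          rcases hgInv hWF with ⟨h1, h2, h3⟩ | ⟨X, Y, β, init, l, h1, h2, h3, h4, h5⟩
          · subst h3; subst h2; subst h1
            rw [auxI_nil, substLast_nil]
          · subst h3
            have hl : Stmts G P C l := hch l (by simp)
            have hinit : ∀ r ∈ init, Stmts G P C r := fun r hr => hch r (by simp [hr])
            have hlWF : l.WF (GLCT G P C) := hts l (by simp)
            have hinitWF : ∀ r ∈ init, r.WF (GLCT G P C) := fun r hr => hts r (by simp [hr])
            obtain ⟨wl, tsl, rfl⟩ := node_of_label h4
            rw [auxI_concat, denOf_node]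
            rw [hl.2.2.2.2.2.2.2.1 nu (Sum.inl X) y _ s hlWF (by simp) (by simp)]
            obtain ⟨wa, tsa, rfl⟩ := node_of_label hacclab
            rw [auxS_cons, numOf_node, substLast_concat]
            have hmaps : (init.map hS).map fS = init := by
              rw [List.map_map]
              conv_rhs => rw [← List.map_id init]
              exact List.map_congr_left fun r hr => (hinit r hr).2.2.2.2.2.2.1 (hinitWF r hr)
            rw [hmaps]
        · -- SB
          intro a d hWF hlab
          simp only [label_node, Option.some.injEq, Sum.inl.injEq, LCNT.slash.injEq] at hlab
          obtain ⟨rfl, rfl⟩ := hlab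
          have hts := (wf_node_inv hWF).2
          rcases hsInv hWF with ⟨h1, h2, h3⟩ | ⟨X, α, β, t1, rest, h1, h2, h3, h4, h5⟩
          · subst h3; subst h2; subst h1
            rw [substBase_nil]
          · subst h3; subst h1
            have ht1 : Stmts G P C t1 := hch t1 (List.mem_cons_self)
            have ht1WF : t1.WF (SPEC G P C) := hts t1 (List.mem_cons_self)
            rw [substBase_cons, ht1.2.2.2.2.2.2.2.2.1 α de ht1WF h4]
        · -- SL
          intro n b hWF hlab
          simp only [label_node, Option.some.injEq, Sum.inl.injEq, LCNT.slash.injEq] at hlab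
          obtain ⟨rfl, rfl⟩ := hlab
          have hts := (wf_node_inv hWF).2
          rcases hgInv hWF with ⟨h1, h2, h3⟩ | ⟨X, Y, β, init, l, h1, h2, h3, h4, h5⟩
          · subst h3; subst h2; subst h1
            rw [substLast_nil]
          · subst h3
            have hl : Stmts G P C l := hch l (by simp)
            have hlWF : l.WF (GLCT G P C) := hts l (by simp)
            rw [substLast_concat, hl.2.2.2.2.2.2.2.2.2 nu (Sum.inl X) hlWF h4]

end Master

end SpecGlct

/-- Speculation and GLCT (with the same parameters) have fully bijectively
equivalent derivation sets, over all symbols, preserving root label, yield,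
and weight. -/
theorem SPEC_GLCT_bijective_equivalence [CommSemiring W]
    (G : WCFG N T W) (P : Set (GRule N T W)) (C : Set (GSym N T))
    (hP : P ⊆ G.rules) (hPnn : ∀ r ∈ P, r.2.1 ≠ []) :
    ∃ φ : {t : DTree (LCNT N T) T W // t.WF (SPEC G P C)} ≃
          {t : DTree (LCNT N T) T W // t.WF (GLCT G P C)},
      ∀ t, (φ t : DTree (LCNT N T) T W).label = t.1.label ∧
           (φ t : DTree (LCNT N T) T W).yield = t.1.yield ∧
           (φ t : DTree (LCNT N T) T W).weight = t.1.weight := by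
  classical
  refine ⟨⟨fun t => ⟨SpecGlct.fS t.1, ((SpecGlct.master G P C (sizeOf t.1) t.1 le_rfl).1 t.2).1⟩,
          fun t => ⟨SpecGlct.hS t.1, ((SpecGlct.master G P C (sizeOf t.1) t.1 le_rfl).2.2.1 t.2).1⟩,
          ?_, ?_⟩, ?_⟩
  · intro t
    exact Subtype.ext ((SpecGlct.master G P C _ t.1 le_rfl).2.2.2.2.1 t.2)
  · intro t
    exact Subtype.ext ((SpecGlct.master G P C _ t.1 le_rfl).2.2.2.2.2.2.1 t.2)
  · intro t
    obtain ⟨h1, h2, h3, h4⟩ := (SpecGlct.master G P C _ t.1 le_rfl).1 t.2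
    exact ⟨h2, h3, h4⟩
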